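/- Biorthogonality relation: with φ_n(t,x) = (1/√2) t^{-(n+1)/2} e^{-x²/(4t)} φ_n(x/√(2t)) and φ̂_n(t,x) = t^{n/2} e^{x²/(4t)} φ_n(x/√(2t)), for 0 < t₁ < t₂, ∫_ℝ ∫_ℝ φ̂_n(t₂, x₂) p(t₂-t₁, x₂|x₁) φ_{n'}(t₁, x₁) dx₁ dx₂ = δ_{n,n'} for all nonnegative integers n, n'. -/

import Mathlib

open MeasureTheory Real Polynomial

/-- The one-dimensional heat kernel `p(t, y | x)`. -/
noncomputable def heatKernel (t y x : ℝ) : ℝ :=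
  (Real.sqrt (2 * π * t))⁻¹ * Real.exp (-(y - x) ^ 2 / (2 * t))

/-- Hermite polynomials by the Rodrigues formula. -/
noncomputable def hermiteH (n : ℕ) (x : ℝ) : ℝ :=
  (-1 : ℝ) ^ n * Real.exp (x ^ 2) * iteratedDeriv n (fun y => Real.exp (-(y ^ 2))) x

/-- Hermite orthonormal functions `φ_n`. -/
noncomputable def hermiteFun (n : ℕ) (x : ℝ) : ℝ :=
  (Real.sqrt (Real.sqrt π * 2 ^ n * n.factorial))⁻¹ * Real.exp (-(x ^ 2) / 2) * hermiteH n x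

/-- The space-time functions `φ_n(t,x)`. -/
noncomputable def phiT (n : ℕ) (t x : ℝ) : ℝ :=
  (Real.sqrt 2)⁻¹ * t ^ (-(((n : ℝ) + 1) / 2)) * Real.exp (-(x ^ 2) / (4 * t)) *
    hermiteFun n (x / Real.sqrt (2 * t))

/-- The dual space-time functions `φ̂_n(t,x)`. -/
noncomputable def phiHat (n : ℕ) (t x : ℝ) : ℝ :=
  t ^ ((n : ℝ) / 2) * Real.exp (x ^ 2 / (4 * t)) * hermiteFun n (x / Real.sqrt (2 * t))

/-- Physicists' Hermite polynomials. -/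
noncomputable def PH : ℕ → Polynomial ℝ
  | 0 => 1
  | n+1 => C 2 * X * PH n - derivative (PH n)

lemma PH_zero : PH 0 = 1 := rfl
lemma PH_succ (n : ℕ) : PH (n+1) = C 2 * X * PH n - derivative (PH n) := rfl

lemma PH_derivative (n : ℕ) : derivative (PH (n+1)) = C (2*(n+1) : ℝ) * PH n := by
  induction n with
  | zero => simp [PH_succ, PH_zero]
  | succ k ih =>
    have : derivative (PH (k+1+1)) = C 2 * PH (k+1) + C (2*(k+1) : ℝ) * (C 2 * X * PH k - derivative (PH k)) := by
      rw [PH_succ (k+1), derivative_sub, derivative_mul, derivative_mul, ih, derivative_mul]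
      simp
      ring
    have harg : (2:ℝ) + 2*((k:ℝ)+1) = 2*((↑(k+1):ℝ)+1) := by push_cast; ring
    rw [this, ← PH_succ k, ← add_mul, ← C_add, harg]

lemma PH_rec (n : ℕ) : PH (n+2) = C 2 * X * PH (n+1) - C (2*(n+1) : ℝ) * PH n := by
  rw [PH_succ (n+1), PH_derivative]

/-- helper derivative of gaussian -/
lemma hasDerivAt_gauss (b μ x : ℝ) :
    HasDerivAt (fun y : ℝ => Real.exp (-b*(y-μ)^2)) ((-2*b*(x-μ)) * Real.exp (-b*(x-μ)^2)) x := by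
  have h1 : HasDerivAt (fun y : ℝ => -b*(y-μ)^2) (-2*b*(x-μ)) x := by
    have h := (((hasDerivAt_id x).sub_const μ).pow 2).const_mul (-b)
    refine h.congr_deriv ?_
    simp [id_eq]
    ring
  have h2 := h1.exp
  convert h2 using 1
  ring

lemma hasDerivAt_poly_gauss (p : Polynomial ℝ) (b μ x : ℝ) :
    HasDerivAt (fun y : ℝ => p.eval y * Real.exp (-b*(y-μ)^2))
      ((p.derivative.eval x - 2*b*(x-μ)*p.eval x) * Real.exp (-b*(x-μ)^2)) x := by
  have h := (p.hasDerivAt x).mul (hasDerivAt_gauss b μ x)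
  refine h.congr_deriv ?_
  ring

lemma gauss_eq (x : ℝ) : Real.exp (-(x^2)) = Real.exp (-1*(x-0)^2) := by norm_num

lemma iteratedDeriv_gauss (n : ℕ) :
    iteratedDeriv n (fun y => Real.exp (-(y ^ 2)))
      = fun x => (-1:ℝ)^n * (PH n).eval x * Real.exp (-(x^2)) := by
  induction n with
  | zero => funext x; simp [PH]
  | succ k ih =>
    funext x
    rw [iteratedDeriv_succ, ih]
    have h : HasDerivAt (fun y : ℝ => (-1:ℝ)^k * ((PH k).eval y * Real.exp (-1*(y-0)^2)))
        ((-1:ℝ)^k * (((PH k).derivative.eval x - 2*1*(x-0)*(PH k).eval x) * Real.exp (-1*(x-0)^2))) x :=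
      (hasDerivAt_poly_gauss (PH k) 1 0 x).const_mul _
    have heq : (fun y : ℝ => (-1:ℝ)^k * (PH k).eval y * Real.exp (-(y^2)))
        = fun y : ℝ => (-1:ℝ)^k * ((PH k).eval y * Real.exp (-1*(y-0)^2)) := by
      funext y; rw [mul_assoc, ← gauss_eq]
    rw [heq, h.deriv, gauss_eq x]
    show _ = (-1:ℝ)^(k+1) * (C 2 * X * PH k - derivative (PH k)).eval x * Real.exp (-1*(x-0)^2)
    simp only [eval_sub, eval_mul, eval_C, eval_X]
    ring

lemma hermiteH_eq (n : ℕ) (x : ℝ) :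
    (-1 : ℝ) ^ n * Real.exp (x ^ 2) * iteratedDeriv n (fun y => Real.exp (-(y ^ 2))) x
      = (PH n).eval x := by
  rw [iteratedDeriv_gauss]
  rw [show ((-1:ℝ)^n * Real.exp (x^2) * ((-1:ℝ)^n * (PH n).eval x * Real.exp (-(x^2))))
    = ((-1:ℝ)^n)^2 * (PH n).eval x * (Real.exp (x^2) * Real.exp (-(x^2))) by ring]
  rw [← Real.exp_add]
  simp [← pow_mul, pow_mul']

lemma integrable_pow_gauss {b : ℝ} (hb : 0 < b) (m : ℕ) :
    Integrable (fun x : ℝ => x ^ m * Real.exp (-b * x ^ 2)) := by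
  have h := integrable_rpow_mul_exp_neg_mul_sq hb (s := (m:ℝ))
    (lt_of_lt_of_le neg_one_lt_zero (Nat.cast_nonneg m))
  simpa [Real.rpow_natCast] using h

lemma integrable_poly_gauss_centered (p : Polynomial ℝ) {b : ℝ} (hb : 0 < b) :
    Integrable (fun x : ℝ => p.eval x * Real.exp (-b * x ^ 2)) := by
  induction p using Polynomial.induction_on' with
  | add f g hf hg => simpa [add_mul, Pi.add_def] using hf.add hg
  | monomial k c =>
    simp only [Polynomial.eval_monomial]
    simpa [mul_assoc] using (integrable_pow_gauss hb k).const_mul c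

lemma integrable_poly_gauss (p : Polynomial ℝ) {b : ℝ} (hb : 0 < b) (μ : ℝ) :
    Integrable (fun x : ℝ => p.eval x * Real.exp (-b * (x - μ) ^ 2)) := by
  have h := (integrable_poly_gauss_centered (p.comp (X + C μ)) hb).comp_sub_right μ
  refine h.congr (Filter.Eventually.of_forall fun x => ?_)
  simp [Polynomial.eval_comp]

lemma integral_gauss_shift (b μ : ℝ) :
    ∫ x : ℝ, Real.exp (-b * (x - μ) ^ 2) = Real.sqrt (π / b) := by
  rw [show (fun x : ℝ => Real.exp (-b * (x - μ) ^ 2))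
      = fun x => (fun y : ℝ => Real.exp (-b * y ^ 2)) (x - μ) from rfl]
  rw [integral_sub_right_eq_self (fun y : ℝ => Real.exp (-b * y ^ 2)) μ]
  exact integral_gaussian b

lemma integral_odd_gauss {b : ℝ} : ∫ x : ℝ, x * Real.exp (-b * x ^ 2) = 0 := by
  have h : ∫ x : ℝ, -x * Real.exp (-b * (-x) ^ 2) = ∫ x : ℝ, x * Real.exp (-b * x ^ 2) :=
    integral_neg_eq_self (fun x : ℝ => x * Real.exp (-b * x ^ 2)) _
  simp only [neg_sq, neg_mul] at h
  rw [integral_neg] at h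
  simp only [neg_mul] at *
  linarith

lemma integral_x_gauss {b : ℝ} (hb : 0 < b) (μ : ℝ) :
    ∫ x : ℝ, x * Real.exp (-b * (x - μ) ^ 2) = μ * Real.sqrt (π / b) := by
  have h0 : (fun x : ℝ => x * Real.exp (-b * (x - μ) ^ 2))
      = fun x => (fun y : ℝ => (y + μ) * Real.exp (-b * y ^ 2)) (x - μ) := by
    funext x; simp
  rw [h0, integral_sub_right_eq_self (fun y : ℝ => (y + μ) * Real.exp (-b * y ^ 2)) μ]
  have h1 : (fun y : ℝ => (y + μ) * Real.exp (-b * y ^ 2))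
      = fun y : ℝ => y * Real.exp (-b * y ^ 2) + μ * Real.exp (-b * y ^ 2) := by
    funext y; ring
  rw [h1, integral_add (integrable_mul_exp_neg_mul_sq hb)
    ((integrable_exp_neg_mul_sq hb).const_mul μ), integral_odd_gauss,
    MeasureTheory.integral_const_mul, integral_gaussian]
  ring

lemma integral_parts_gauss (p : Polynomial ℝ) {b : ℝ} (hb : 0 < b) (μ : ℝ) :
    ∫ x : ℝ, p.derivative.eval x * Real.exp (-b * (x - μ) ^ 2)
      = ∫ x : ℝ, (2*b*(x-μ)) * (p.eval x * Real.exp (-b * (x - μ) ^ 2)) := by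
  have hu : ∀ x : ℝ, HasDerivAt (fun y => p.eval y) (p.derivative.eval x) x :=
    fun x => p.hasDerivAt x
  have hv : ∀ x : ℝ, HasDerivAt (fun y : ℝ => Real.exp (-b*(y-μ)^2))
      ((-2*b*(x-μ)) * Real.exp (-b*(x-μ)^2)) x := fun x => hasDerivAt_gauss b μ x
  have huv' : Integrable (fun x : ℝ => p.eval x * ((-2*b*(x-μ)) * Real.exp (-b*(x-μ)^2))) := by
    refine (integrable_poly_gauss (C (-2*b) * (X - C μ) * p) hb μ).congr
      (Filter.Eventually.of_forall fun x => ?_)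
    simp only [eval_mul, eval_sub, eval_C, eval_X]
    ring
  have hu'v : Integrable (fun x : ℝ => p.derivative.eval x * Real.exp (-b*(x-μ)^2)) :=
    integrable_poly_gauss _ hb μ
  have huv : Integrable (fun x : ℝ => p.eval x * Real.exp (-b*(x-μ)^2)) :=
    integrable_poly_gauss _ hb μ
  have key := integral_mul_deriv_eq_deriv_mul_of_integrable (fun x _ => hu x) (fun x _ => hv x) huv' hu'v huv
  rw [show (∫ x : ℝ, p.eval x * ((-2*b*(x-μ)) * Real.exp (-b*(x-μ)^2)))
      = ∫ x : ℝ, -((2*b*(x-μ)) * (p.eval x * Real.exp (-b*(x-μ)^2))) by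
    congr 1; funext x; ring, integral_neg] at key
  linarith [key]

lemma integral_PH_gauss {a b : ℝ} (μ : ℝ) (ha : a ≠ 0) (hb : 0 < b) (hc : 0 < 1 - a^2/b)
    (n : ℕ) :
    ∫ x : ℝ, (PH n).eval (a*x) * Real.exp (-b * (x - μ) ^ 2)
      = Real.sqrt (π/b) * (Real.sqrt (1-a^2/b))^n
          * (PH n).eval (a*μ/Real.sqrt (1-a^2/b)) := by
  set c := Real.sqrt (1-a^2/b) with hcdef
  set S := Real.sqrt (π/b) with hSdef
  have hcpos : 0 < c := Real.sqrt_pos.mpr hc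
  have hc2 : c^2 = 1-a^2/b := Real.sq_sqrt hc.le
  have hb' : (b:ℝ) ≠ 0 := ne_of_gt hb
  have hc' : c ≠ 0 := ne_of_gt hcpos
  have hSb : S * Real.sqrt b = Real.sqrt π := by
    rw [hSdef, ← Real.sqrt_mul (by positivity : (0:ℝ) ≤ π/b)]
    rw [div_mul_cancel₀ _ hb']
  -- integrability of things of the form (poly at a*x) * gaussian
  have hint : ∀ q : Polynomial ℝ, Integrable
      (fun x : ℝ => q.eval (a*x) * Real.exp (-b * (x - μ) ^ 2)) := by
    intro q
    refine (integrable_poly_gauss (q.comp (C a * X)) hb μ).congr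
      (Filter.Eventually.of_forall fun x => ?_)
    simp [Polynomial.eval_comp]
  have main : ∀ k : ℕ,
      (∫ x : ℝ, (PH k).eval (a*x) * Real.exp (-b * (x - μ) ^ 2)
        = S * c^k * (PH k).eval (a*μ/c))
      ∧ (∫ x : ℝ, (PH (k+1)).eval (a*x) * Real.exp (-b * (x - μ) ^ 2)
        = S * c^(k+1) * (PH (k+1)).eval (a*μ/c)) := by
    intro k
    induction k with
    | zero =>
      constructor
      · simp only [PH, eval_one, one_mul]
        rw [integral_gauss_shift]
        simp [hSdef]
      · have h1 : (PH 1) = C 2 * X := by simp [PH]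
        simp only [h1, eval_mul, eval_C, eval_X]
        rw [show (fun x : ℝ => 2 * (a*x) * Real.exp (-b * (x - μ) ^ 2))
            = fun x : ℝ => (2*a) * (x * Real.exp (-b * (x - μ) ^ 2)) by funext x; ring]
        rw [MeasureTheory.integral_const_mul, integral_x_gauss hb]
        field_simp
        ring
    | succ k ih =>
      obtain ⟨h0, h1⟩ := ih
      refine ⟨h1, ?_⟩
      -- the first-moment identity from integration by parts
      have hq : ∀ x : ℝ, (((PH (k+1)).comp (C a * X)).derivative).eval x
          = a * (2*(k+1) : ℝ) * (PH k).eval (a*x) := by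
        intro x
        rw [Polynomial.derivative_comp, PH_derivative]
        simp [Polynomial.eval_comp]
        ring
      have parts := integral_parts_gauss ((PH (k+1)).comp (C a * X)) hb μ
      rw [show (fun x : ℝ => (((PH (k+1)).comp (C a * X)).derivative).eval x
            * Real.exp (-b * (x - μ) ^ 2))
          = fun x : ℝ => (a * (2*(k+1):ℝ)) * ((PH k).eval (a*x) * Real.exp (-b * (x - μ) ^ 2)) by
        funext x; rw [hq x]; ring] at parts
      rw [MeasureTheory.integral_const_mul] at parts
      have hcomp : ∀ x : ℝ, ((PH (k+1)).comp (C a * X)).eval x = (PH (k+1)).eval (a*x) := by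
        intro x; simp [Polynomial.eval_comp]
      rw [show (fun x : ℝ => (2*b*(x-μ)) * (((PH (k+1)).comp (C a * X)).eval x
            * Real.exp (-b * (x - μ) ^ 2)))
          = fun x : ℝ => (2*b) * (x * ((PH (k+1)).eval (a*x) * Real.exp (-b * (x - μ) ^ 2)))
            - (2*b*μ) * ((PH (k+1)).eval (a*x) * Real.exp (-b * (x - μ) ^ 2)) by
        funext x; rw [hcomp x]; ring] at parts
      have hintx : Integrable (fun x : ℝ =>
          x * ((PH (k+1)).eval (a*x) * Real.exp (-b * (x - μ) ^ 2))) := by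
        refine (integrable_poly_gauss (X * ((PH (k+1)).comp (C a * X))) hb μ).congr
          (Filter.Eventually.of_forall fun x => ?_)
        simp [Polynomial.eval_comp]
        ring
      rw [MeasureTheory.integral_sub (hintx.const_mul _) ((hint _).const_mul _),
        MeasureTheory.integral_const_mul, MeasureTheory.integral_const_mul, h1, h0] at parts
      -- now express the (k+2) integral
      have hrec : ∀ x : ℝ, (PH (k+2)).eval (a*x)
          = 2*(a*x) * (PH (k+1)).eval (a*x) - (2*((k:ℝ)+1)) * (PH k).eval (a*x) := by
        intro x
        rw [PH_rec]
        push_cast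
        simp
      rw [show (fun x : ℝ => (PH (k+2)).eval (a*x) * Real.exp (-b * (x - μ) ^ 2))
          = fun x : ℝ => (2*a) * (x * ((PH (k+1)).eval (a*x) * Real.exp (-b * (x - μ) ^ 2)))
            - (2*((k:ℝ)+1)) * ((PH k).eval (a*x) * Real.exp (-b * (x - μ) ^ 2)) by
        funext x; rw [hrec x]; ring]
      rw [MeasureTheory.integral_sub (hintx.const_mul _) ((hint _).const_mul _),
        MeasureTheory.integral_const_mul, MeasureTheory.integral_const_mul, h0]
      -- rewrite the target eval
      have heval : (PH (k+1+1)).eval (a*μ/c)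
          = 2*(a*μ/c) * (PH (k+1)).eval (a*μ/c) - (2*((k:ℝ)+1)) * (PH k).eval (a*μ/c) := by
        rw [PH_rec]; push_cast; simp
      rw [heval]
      -- make everything opaque
      generalize hP1 : (PH (k+1)).eval (a*μ/c) = P1 at parts ⊢
      generalize hP0 : (PH k).eval (a*μ/c) = P0 at parts ⊢
      generalize hTg : (∫ x : ℝ, x * ((PH (k+1)).eval (a*x)
          * Real.exp (-b * (x - μ) ^ 2))) = T at parts ⊢
      have hT : T = μ*(S*c^(k+1)*P1) + (a*((k:ℝ)+1)/b)*(S*c^k*P0) := by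
        field_simp
        linear_combination -parts / 2
      rw [hT]
      have e1 : S * c^(k+1+1) * (2*(a*μ/c)*P1 - 2*((k:ℝ)+1)*P0)
          = 2*a*μ*(S*c^(k+1)*P1) - 2*((k:ℝ)+1)*(1-a^2/b)*(S*c^k*P0) := by
        rw [← hc2]
        field_simp
        ring
      rw [e1]
      field_simp
      ring
  exact (main n).1

lemma integrable_poly_gauss1 (p : Polynomial ℝ) :
    Integrable (fun x : ℝ => p.eval x * Real.exp (-(x^2))) := by
  refine (integrable_poly_gauss p one_pos 0).congr (Filter.Eventually.of_forall fun x => ?_)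
  ring_nf

lemma orth_step (n m : ℕ) :
    ∫ x : ℝ, (PH n).eval x * ((PH (m+1)).eval x * Real.exp (-(x^2)))
      = ∫ x : ℝ, ((PH n).derivative).eval x * ((PH m).eval x * Real.exp (-(x^2))) := by
  have hu : ∀ x : ℝ, HasDerivAt (fun y => (PH n).eval y) (((PH n).derivative).eval x) x :=
    fun x => (PH n).hasDerivAt x
  have hv : ∀ x : ℝ, HasDerivAt (fun y : ℝ => (PH m).eval y * Real.exp (-(y^2)))
      (-((PH (m+1)).eval x * Real.exp (-(x^2)))) x := by
    intro x
    have h := hasDerivAt_poly_gauss (PH m) 1 0 x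
    have heq : (fun y : ℝ => (PH m).eval y * Real.exp (-(y^2)))
        = fun y : ℝ => (PH m).eval y * Real.exp (-1*(y-0)^2) := by
      funext y; rw [gauss_eq]
    rw [heq]
    convert h using 1
    rw [gauss_eq]
    rw [show PH (m+1) = C 2 * X * PH m - derivative (PH m) from rfl]
    simp only [eval_sub, eval_mul, eval_C, eval_X]
    ring
  have huv' : Integrable (fun x : ℝ =>
      (PH n).eval x * (-((PH (m+1)).eval x * Real.exp (-(x^2))))) := by
    refine ((integrable_poly_gauss1 (PH n * PH (m+1))).neg).congr
      (Filter.Eventually.of_forall fun x => ?_)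
    simp only [Pi.neg_apply, eval_mul]
    ring
  have hu'v : Integrable (fun x : ℝ =>
      ((PH n).derivative).eval x * ((PH m).eval x * Real.exp (-(x^2)))) := by
    refine (integrable_poly_gauss1 ((PH n).derivative * PH m)).congr
      (Filter.Eventually.of_forall fun x => ?_)
    simp only [eval_mul]
    ring
  have huv : Integrable (fun x : ℝ =>
      (PH n).eval x * ((PH m).eval x * Real.exp (-(x^2)))) := by
    refine (integrable_poly_gauss1 (PH n * PH m)).congr
      (Filter.Eventually.of_forall fun x => ?_)
    simp only [eval_mul]
    ring
  have key := integral_mul_deriv_eq_deriv_mul_of_integrable (fun x _ => hu x) (fun x _ => hv x) huv' hu'v huv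
  rw [show (∫ x : ℝ, (PH n).eval x * (-((PH (m+1)).eval x * Real.exp (-(x^2)))))
      = -∫ x : ℝ, (PH n).eval x * ((PH (m+1)).eval x * Real.exp (-(x^2))) by
    rw [← integral_neg]; congr 1; funext x; ring] at key
  linarith [key]

lemma gauss_integral_one : ∫ x : ℝ, Real.exp (-(x^2)) = Real.sqrt π := by
  have h := integral_gauss_shift 1 0
  rw [show (fun x : ℝ => Real.exp (-1 * (x - 0)^2)) = fun x : ℝ => Real.exp (-(x^2)) by
    funext x; rw [← gauss_eq]] at h
  simpa using h

lemma PH_orth (n : ℕ) : ∀ m : ℕ,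
    ∫ x : ℝ, (PH n).eval x * ((PH m).eval x * Real.exp (-(x^2)))
      = if n = m then Real.sqrt π * 2^n * n.factorial else 0 := by
  induction n with
  | zero =>
    intro m
    match m with
    | 0 => simp [PH, gauss_integral_one]
    | j+1 =>
      rw [orth_step 0 j]
      simp [PH]
  | succ i ih =>
    intro m
    match m with
    | 0 =>
      rw [show (fun x : ℝ => (PH (i+1)).eval x * ((PH 0).eval x * Real.exp (-(x^2))))
          = fun x : ℝ => (PH 0).eval x * ((PH (i+1)).eval x * Real.exp (-(x^2))) by
        funext x; ring]
      rw [orth_step 0 i]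
      simp [PH]
    | j+1 =>
      rw [orth_step (i+1) j, PH_derivative]
      rw [show (fun x : ℝ => (C (2*(i+1):ℝ) * PH i).eval x * ((PH j).eval x * Real.exp (-(x^2))))
          = fun x : ℝ => (2*((i:ℝ)+1)) * ((PH i).eval x * ((PH j).eval x * Real.exp (-(x^2)))) by
        funext x; simp; ring]
      rw [MeasureTheory.integral_const_mul, ih j]
      by_cases hij : i = j
      · subst hij
        simp only [if_pos rfl]
        rw [Nat.factorial_succ]
        push_cast
        ring
      · rw [if_neg hij, if_neg (by omega)]
        ring


lemma hermiteFun_PH (m : ℕ) (x : ℝ) :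
    hermiteFun m x = (Real.sqrt (Real.sqrt π * 2 ^ m * m.factorial))⁻¹
      * Real.exp (-(x ^ 2) / 2) * (PH m).eval x := by
  have h : hermiteH m x = (PH m).eval x := by rw [hermiteH]; exact hermiteH_eq m x
  rw [hermiteFun, h]

lemma sqrt_pow_eq_rpow {t : ℝ} (ht : 0 ≤ t) (m : ℕ) :
    (Real.sqrt t) ^ m = t ^ ((m:ℝ)/2) := by
  rw [Real.sqrt_eq_rpow, ← Real.rpow_natCast (t ^ ((1:ℝ)/2)) m, ← Real.rpow_mul ht]
  congr 1
  ring

lemma rpow_neg_half {t : ℝ} (ht : 0 < t) (m : ℕ) :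
    t ^ (-(((m:ℝ)+1)/2)) = ((Real.sqrt t) ^ (m+1))⁻¹ := by
  rw [Real.rpow_neg ht.le, sqrt_pow_eq_rpow ht.le]
  congr 2
  push_cast
  ring

lemma outer_eq (n n' : ℕ) {t : ℝ} (ht : 0 < t) :
    ∫ x : ℝ, phiHat n t x * phiT n' t x = if n = n' then 1 else 0 := by
  have h2t : (0:ℝ) < 2*t := by linarith
  have hs2t : Real.sqrt (2*t) ≠ 0 := ne_of_gt (Real.sqrt_pos.mpr h2t)
  set a := (Real.sqrt (2*t))⁻¹ with hadef
  have hasq : a^2 = (2*t)⁻¹ := by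
    rw [hadef, inv_pow, Real.sq_sqrt h2t.le]
  set Kn := (Real.sqrt (Real.sqrt π * 2 ^ n * n.factorial))⁻¹ with hKn
  set Kn' := (Real.sqrt (Real.sqrt π * 2 ^ n' * n'.factorial))⁻¹ with hKn'
  set D := t ^ ((n:ℝ)/2) * Kn * ((Real.sqrt 2)⁻¹ * t ^ (-(((n':ℝ)+1)/2)) * Kn') with hD
  have hpt : ∀ x : ℝ, phiHat n t x * phiT n' t x
      = D * ((PH n).eval (a*x) * ((PH n').eval (a*x) * Real.exp (-((a*x)^2)))) := by
    intro x
    rw [phiHat, phiT, hermiteFun_PH, hermiteFun_PH]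
    have harg : x / Real.sqrt (2*t) = a * x := by rw [hadef]; ring
    rw [harg]
    have hexp : Real.exp (x^2/(4*t)) * (Real.exp (-((a*x)^2)/2) * (Real.exp (-(x^2)/(4*t))
        * Real.exp (-((a*x)^2)/2))) = Real.exp (-((a*x)^2)) := by
      rw [← Real.exp_add, ← Real.exp_add, ← Real.exp_add]
      congr 1
      rw [mul_pow, hasq]
      field_simp
      ring
    rw [hD]
    linear_combination (t ^ ((n:ℝ)/2) * Kn * (Real.sqrt 2)⁻¹ * t ^ (-(((n':ℝ)+1)/2)) * Kn'
      * (PH n).eval (a*x) * (PH n').eval (a*x)) * hexp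
  rw [show (fun x : ℝ => phiHat n t x * phiT n' t x)
      = fun x : ℝ => D * ((PH n).eval (a*x) * ((PH n').eval (a*x) * Real.exp (-((a*x)^2))))
    from funext hpt]
  rw [MeasureTheory.integral_const_mul]
  have hcomp := MeasureTheory.Measure.integral_comp_mul_left
    (fun y : ℝ => (PH n).eval y * ((PH n').eval y * Real.exp (-(y^2)))) a
  try simp only at hcomp
  rw [hcomp, PH_orth n n']
  have habs : |a⁻¹| = Real.sqrt (2*t) := by
    rw [hadef, inv_inv, abs_of_nonneg (Real.sqrt_nonneg _)]
  rw [habs, smul_eq_mul]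
  by_cases hnn : n = n'
  · subst hnn
    rw [if_pos rfl, if_pos rfl, hD]
    have hM : (0:ℝ) < Real.sqrt π * 2^n * n.factorial := by positivity
    have hKsq : Kn * Kn * (Real.sqrt π * 2^n * n.factorial) = 1 := by
      rw [hKn, ← mul_inv, Real.mul_self_sqrt hM.le, inv_mul_cancel₀ hM.ne']
    rw [← sqrt_pow_eq_rpow ht.le n, rpow_neg_half ht n,
      Real.sqrt_mul (by norm_num : (0:ℝ) ≤ 2) t]
    have hst : Real.sqrt t ≠ 0 := ne_of_gt (Real.sqrt_pos.mpr ht)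
    have hs2 : Real.sqrt 2 ≠ 0 := by positivity
    field_simp
    rw [hKn', ← hKn]
    linear_combination ((Real.sqrt t)^(n+1)) * hKsq
  · rw [if_neg hnn, if_neg hnn]
    simp

lemma inner_eq (n' : ℕ) {t₁ t₂ : ℝ} (h₁ : 0 < t₁) (h₂ : t₁ < t₂) (x₂ : ℝ) :
    ∫ x₁ : ℝ, heatKernel (t₂ - t₁) x₂ x₁ * phiT n' t₁ x₁ = phiT n' t₂ x₂ := by
  have ht₂ : 0 < t₂ := h₁.trans h₂
  have hs : 0 < t₂ - t₁ := by linarith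
  have h2t₁ : (0:ℝ) < 2*t₁ := by linarith
  have h2t₂ : (0:ℝ) < 2*t₂ := by linarith
  set a := (Real.sqrt (2*t₁))⁻¹ with hadef
  have ha : a ≠ 0 := by
    rw [hadef]
    exact inv_ne_zero (ne_of_gt (Real.sqrt_pos.mpr h2t₁))
  have hasq : a^2 = (2*t₁)⁻¹ := by
    rw [hadef, inv_pow, Real.sq_sqrt h2t₁.le]
  set b := t₂/(2*(t₂-t₁)*t₁) with hbdef
  have hb : 0 < b := by rw [hbdef]; positivity
  set m := t₁/t₂*x₂ with hmdef
  set K := (Real.sqrt (Real.sqrt π * 2 ^ n' * n'.factorial))⁻¹ with hK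
  have hcval : 1 - a^2/b = t₁/t₂ := by
    rw [hasq, hbdef]
    field_simp
    ring
  have hc : 0 < 1 - a^2/b := by rw [hcval]; positivity
  set CC := (Real.sqrt (2*π*(t₂-t₁)))⁻¹ * ((Real.sqrt 2)⁻¹ * t₁ ^ (-(((n':ℝ)+1)/2)) * K)
    * Real.exp (-(x₂^2)/(2*t₂)) with hCC
  have hpt : ∀ x₁ : ℝ, heatKernel (t₂-t₁) x₂ x₁ * phiT n' t₁ x₁
      = CC * ((PH n').eval (a*x₁) * Real.exp (-b*(x₁-m)^2)) := by
    intro x₁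
    rw [heatKernel, phiT, hermiteFun_PH]
    have harg : x₁ / Real.sqrt (2*t₁) = a * x₁ := by rw [hadef]; ring
    rw [harg]
    have hexp : Real.exp (-(x₂-x₁)^2/(2*(t₂-t₁))) * (Real.exp (-(x₁^2)/(4*t₁))
        * Real.exp (-((a*x₁)^2)/2)) = Real.exp (-(x₂^2)/(2*t₂)) * Real.exp (-b*(x₁-m)^2) := by
      rw [← Real.exp_add, ← Real.exp_add, ← Real.exp_add]
      congr 1
      rw [mul_pow, hasq, hbdef, hmdef]
      field_simp
      ring
    rw [hCC]
    linear_combination ((Real.sqrt (2*π*(t₂-t₁)))⁻¹ * (Real.sqrt 2)⁻¹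
      * t₁ ^ (-(((n':ℝ)+1)/2)) * K * (PH n').eval (a*x₁)) * hexp
  rw [show (fun x₁ : ℝ => heatKernel (t₂-t₁) x₂ x₁ * phiT n' t₁ x₁)
      = fun x₁ : ℝ => CC * ((PH n').eval (a*x₁) * Real.exp (-b*(x₁-m)^2)) from funext hpt]
  rw [MeasureTheory.integral_const_mul, integral_PH_gauss m ha hb hc n', hcval]
  -- simplify the evaluation point
  have harg2 : a * m / Real.sqrt (t₁/t₂) = x₂ / Real.sqrt (2*t₂) := by
    rw [hadef, hmdef, Real.sqrt_div h₁.le, Real.sqrt_mul (by norm_num : (0:ℝ) ≤ 2) t₁,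
      Real.sqrt_mul (by norm_num : (0:ℝ) ≤ 2) t₂]
    have e1 : Real.sqrt t₁ * Real.sqrt t₁ = t₁ := Real.mul_self_sqrt h₁.le
    have e2 : Real.sqrt t₂ * Real.sqrt t₂ = t₂ := Real.mul_self_sqrt ht₂.le
    have p1 : (0:ℝ) < Real.sqrt t₁ := Real.sqrt_pos.mpr h₁
    have p2 : (0:ℝ) < Real.sqrt t₂ := Real.sqrt_pos.mpr ht₂
    have p0 : (0:ℝ) < Real.sqrt 2 := by positivity
    generalize hσ1 : Real.sqrt t₁ = σ1 at e1 p1 ⊢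
    generalize hσ2 : Real.sqrt t₂ = σ2 at e2 p2 ⊢
    generalize hσ0 : Real.sqrt 2 = σ0 at p0 ⊢
    rw [← e1, ← e2]
    field_simp
  rw [harg2]
  -- the constant identity
  have hconst : (Real.sqrt (2*π*(t₂-t₁)))⁻¹ * t₁ ^ (-(((n':ℝ)+1)/2))
      * (Real.sqrt (π/b) * (Real.sqrt (t₁/t₂))^n') = t₂ ^ (-(((n':ℝ)+1)/2)) := by
    rw [rpow_neg_half h₁ n', rpow_neg_half ht₂ n']
    have hπb : π/b = π * (2*(t₂-t₁)*t₁) / t₂ := by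
      rw [hbdef, div_div_eq_mul_div]
    rw [hπb, Real.sqrt_div (by positivity : (0:ℝ) ≤ π * (2*(t₂-t₁)*t₁)) t₂,
      Real.sqrt_mul (le_of_lt Real.pi_pos) (2*(t₂-t₁)*t₁),
      Real.sqrt_mul (by positivity : (0:ℝ) ≤ 2*(t₂-t₁)) t₁,
      Real.sqrt_mul (by positivity : (0:ℝ) ≤ 2*π) (t₂-t₁),
      Real.sqrt_mul (by norm_num : (0:ℝ) ≤ 2) π,
      Real.sqrt_mul (by norm_num : (0:ℝ) ≤ 2) (t₂-t₁),
      Real.sqrt_div h₁.le t₂]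
    have p1 : (0:ℝ) < Real.sqrt t₁ := Real.sqrt_pos.mpr h₁
    have p2 : (0:ℝ) < Real.sqrt t₂ := Real.sqrt_pos.mpr ht₂
    have p0 : (0:ℝ) < Real.sqrt 2 := by positivity
    have pπ : (0:ℝ) < Real.sqrt π := Real.sqrt_pos.mpr Real.pi_pos
    have ps : (0:ℝ) < Real.sqrt (t₂-t₁) := Real.sqrt_pos.mpr hs
    generalize Real.sqrt t₁ = σ1 at p1 ⊢
    generalize Real.sqrt t₂ = σ2 at p2 ⊢
    generalize Real.sqrt 2 = σ0 at p0 ⊢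
    generalize Real.sqrt π = σπ at pπ ⊢
    generalize Real.sqrt (t₂-t₁) = σs at ps ⊢
    field_simp
    rw [div_pow]
    field_simp
    ring
  rw [phiT, hermiteFun_PH]
  have hexp2 : Real.exp (-(x₂^2)/(4*t₂)) * Real.exp (-((x₂/Real.sqrt (2*t₂))^2)/2)
      = Real.exp (-(x₂^2)/(2*t₂)) := by
    rw [← Real.exp_add]
    congr 1
    rw [div_pow, Real.sq_sqrt h2t₂.le]
    field_simp
    ring
  rw [hCC]
  linear_combination ((Real.sqrt 2)⁻¹ * K * Real.exp (-(x₂^2)/(2*t₂))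
      * (PH n').eval (x₂/Real.sqrt (2*t₂))) * hconst
    - (t₂ ^ (-(((n':ℝ)+1)/2)) * (Real.sqrt 2)⁻¹ * K
      * (PH n').eval (x₂/Real.sqrt (2*t₂))) * hexp2

/-- Biorthogonality of `φ̂_n` and `φ_{n'}` with respect to the heat kernel. -/
theorem phi_biorthogonality (n n' : ℕ) (t₁ t₂ : ℝ) (h₁ : 0 < t₁) (h₂ : t₁ < t₂) :
    (∫ x₂ : ℝ, ∫ x₁ : ℝ,
        phiHat n t₂ x₂ * heatKernel (t₂ - t₁) x₂ x₁ * phiT n' t₁ x₁) =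
      if n = n' then 1 else 0 := by
  have key : ∀ x₂ : ℝ, (∫ x₁ : ℝ, phiHat n t₂ x₂ * heatKernel (t₂ - t₁) x₂ x₁ * phiT n' t₁ x₁)
      = phiHat n t₂ x₂ * phiT n' t₂ x₂ := by
    intro x₂
    rw [show (fun x₁ : ℝ => phiHat n t₂ x₂ * heatKernel (t₂ - t₁) x₂ x₁ * phiT n' t₁ x₁)
        = fun x₁ : ℝ => phiHat n t₂ x₂ * (heatKernel (t₂ - t₁) x₂ x₁ * phiT n' t₁ x₁) by
      funext x₁; ring]
    rw [MeasureTheory.integral_const_mul, inner_eq n' h₁ h₂ x₂]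
  rw [show (fun x₂ : ℝ => ∫ x₁ : ℝ, phiHat n t₂ x₂ * heatKernel (t₂ - t₁) x₂ x₁ * phiT n' t₁ x₁)
      = fun x₂ : ℝ => phiHat n t₂ x₂ * phiT n' t₂ x₂ from funext key]
  exact outer_eq n n' (h₁.trans h₂)
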